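/- Let W_n be an increasing sequence of Borel subsets of (0,1)×(0,1) with union W. Define β(W) = inf{Leb(U)+Leb(V) : U,V Borel subsets of (0,1) with W ⊆ (U×(0,1)) ∪ ((0,1)×V)}. Then β(W_n) increases to β(W). -/

import Mathlib

open MeasureTheory Set
open scoped ENNReal

noncomputable section

/-- `β(W)`: the infimum of `Leb(U)+Leb(V)` over Borel sets `U, V ⊆ (0,1)`
whose "cross" `(U×(0,1)) ∪ ((0,1)×V)` covers `W`. -/
def beta (W : Set (ℝ × ℝ)) : ℝ≥0∞ :=
  ⨅ (U : Set ℝ) (V : Set ℝ) (_ : MeasurableSet U) (_ : MeasurableSet V)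
    (_ : U ⊆ Ioo (0:ℝ) 1) (_ : V ⊆ Ioo (0:ℝ) 1)
    (_ : W ⊆ U ×ˢ Ioo (0:ℝ) 1 ∪ Ioo (0:ℝ) 1 ×ˢ V),
    volume U + volume V

lemma beta_le_of_cover {W : Set (ℝ × ℝ)} {U V : Set ℝ} (hU : MeasurableSet U)
    (hV : MeasurableSet V) (hUI : U ⊆ Ioo (0:ℝ) 1) (hVI : V ⊆ Ioo (0:ℝ) 1)
    (hcov : W ⊆ U ×ˢ Ioo (0:ℝ) 1 ∪ Ioo (0:ℝ) 1 ×ˢ V) :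
    beta W ≤ volume U + volume V := by
  unfold beta
  exact iInf_le_of_le U <| iInf_le_of_le V <| iInf_le_of_le hU <| iInf_le_of_le hV <|
    iInf_le_of_le hUI <| iInf_le_of_le hVI <| iInf_le_of_le hcov le_rfl

lemma beta_mono {W W' : Set (ℝ × ℝ)} (h : W ⊆ W') : beta W ≤ beta W' := by
  have : beta W' = ⨅ (U : Set ℝ) (V : Set ℝ) (_ : MeasurableSet U) (_ : MeasurableSet V)
      (_ : U ⊆ Ioo (0:ℝ) 1) (_ : V ⊆ Ioo (0:ℝ) 1)
      (_ : W' ⊆ U ×ˢ Ioo (0:ℝ) 1 ∪ Ioo (0:ℝ) 1 ×ˢ V),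
      volume U + volume V := rfl
  rw [this]
  exact le_iInf fun U => le_iInf fun V => le_iInf fun hU => le_iInf fun hV =>
    le_iInf fun hUI => le_iInf fun hVI => le_iInf fun hcov =>
      beta_le_of_cover hU hV hUI hVI (h.trans hcov)

lemma beta_le_one {W : Set (ℝ × ℝ)} (h : W ⊆ Ioo (0:ℝ) 1 ×ˢ Ioo (0:ℝ) 1) : beta W ≤ 1 := by
  have := beta_le_of_cover (W := W) measurableSet_Ioo MeasurableSet.empty
      (subset_refl _) (empty_subset _) (fun p hp => Or.inl (h hp))
  simpa [Real.volume_Ioo] using this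

lemma beta_iUnion_le (W : ℕ → Set (ℝ × ℝ)) (hmono : Monotone W)
    (hsub : ∀ n, W n ⊆ Ioo (0:ℝ) 1 ×ˢ Ioo (0:ℝ) 1) :
    beta (⋃ n, W n) ≤ ⨆ n, beta (W n) := by
  set L := ⨆ n, beta (W n) with hL
  have hc_le : ∀ k, beta (W k) ≤ L := fun k => le_iSup (fun n => beta (W n)) k
  have hc1 : ∀ k, beta (W k) ≤ 1 := fun k => beta_le_one (hsub k)
  have hcne : ∀ k, beta (W k) ≠ ∞ := fun k => ((hc1 k).trans_lt (by norm_num)).ne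
  apply ENNReal.le_of_forall_pos_le_add
  intro ε hε hLtop
  -- near-optimal covers
  have hex : ∀ k : ℕ, ∃ U V : Set ℝ, MeasurableSet U ∧ MeasurableSet V ∧
      U ⊆ Ioo (0:ℝ) 1 ∧ V ⊆ Ioo (0:ℝ) 1 ∧
      (W k ⊆ U ×ˢ Ioo (0:ℝ) 1 ∪ Ioo (0:ℝ) 1 ×ˢ V) ∧
      volume U + volume V ≤ beta (W k) + (ε : ℝ≥0∞) * 2⁻¹ ^ (k + 1) := by
    intro k
    have hne : (ε : ℝ≥0∞) * 2⁻¹ ^ (k + 1) ≠ 0 := by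
      apply mul_ne_zero
      · exact_mod_cast hε.ne'
      · exact pow_ne_zero _ (by norm_num)
    have hlt : beta (W k) < beta (W k) + (ε : ℝ≥0∞) * 2⁻¹ ^ (k + 1) :=
      ENNReal.lt_add_right (hcne k) hne
    conv_lhs at hlt => rw [show beta (W k) = ⨅ (U : Set ℝ) (V : Set ℝ)
      (_ : MeasurableSet U) (_ : MeasurableSet V)
      (_ : U ⊆ Ioo (0:ℝ) 1) (_ : V ⊆ Ioo (0:ℝ) 1)
      (_ : W k ⊆ U ×ˢ Ioo (0:ℝ) 1 ∪ Ioo (0:ℝ) 1 ×ˢ V),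
      volume U + volume V from rfl]
    simp only [iInf_lt_iff] at hlt
    obtain ⟨U, V, hU, hV, hUI, hVI, hcov, hlt⟩ := hlt
    exact ⟨U, V, hU, hV, hUI, hVI, hcov, hlt.le⟩
  choose U V hU hV hUI hVI hcov hcost using hex
  -- the finite joins
  have hJUmeas : ∀ k M, MeasurableSet (⋃ i ∈ Finset.Icc k M, U i) := fun k M =>
    (Finset.Icc k M).measurableSet_biUnion (fun i _ => hU i)
  have hJVmeas : ∀ k M, MeasurableSet (⋂ i ∈ Finset.Icc k M, V i) := fun k M =>
    (Finset.Icc k M).measurableSet_biInter (fun i _ => hV i)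
  -- finite join covers W k (for k ≤ M)
  have hJcov : ∀ k M, k ≤ M → W k ⊆
      (⋃ i ∈ Finset.Icc k M, U i) ×ˢ Ioo (0:ℝ) 1 ∪
      Ioo (0:ℝ) 1 ×ˢ (⋂ i ∈ Finset.Icc k M, V i) := by
    intro k M hkM p hp
    by_cases hy : p.2 ∈ ⋂ i ∈ Finset.Icc k M, V i
    · exact Or.inr ⟨(hsub k hp).1, hy⟩
    · simp only [mem_iInter, not_forall] at hy
      obtain ⟨i, hi, hyi⟩ := hy
      have hik : k ≤ i := (Finset.mem_Icc.mp hi).1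
      have hpWi : p ∈ W i := hmono hik hp
      rcases hcov i hpWi with h | h
      · exact Or.inl ⟨mem_biUnion hi h.1, h.2⟩
      · exact absurd h.2 hyi
  -- key induction: cost of tail joins
  have key : ∀ d k : ℕ,
      volume (⋃ i ∈ Finset.Icc k (k + d), U i) + volume (⋂ i ∈ Finset.Icc k (k + d), V i)
      ≤ L + ∑ i ∈ Finset.Icc k (k + d), (ε : ℝ≥0∞) * 2⁻¹ ^ (i + 1) := by
    intro d
    induction d with
    | zero =>
      intro k
      simp only [Nat.add_zero, Finset.Icc_self, Finset.sum_singleton]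
      simpa using (hcost k).trans (add_le_add_left (hc_le k) _)
    | succ d ih =>
      intro k
      have hins : Finset.Icc k (k + (d + 1)) = insert k (Finset.Icc (k + 1) (k + 1 + d)) := by
        ext i
        simp only [Finset.mem_Icc, Finset.mem_insert]
        omega
      have hknot : k ∉ Finset.Icc (k + 1) (k + 1 + d) := by
        simp only [Finset.mem_Icc]; omega
      set JU := ⋃ i ∈ Finset.Icc (k + 1) (k + 1 + d), U i with hJU
      set JV := ⋂ i ∈ Finset.Icc (k + 1) (k + 1 + d), V i with hJV
      have hUsplit : (⋃ i ∈ Finset.Icc k (k + (d + 1)), U i) = U k ∪ JU := by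
        rw [hins, Finset.set_biUnion_insert]
      have hVsplit : (⋂ i ∈ Finset.Icc k (k + (d + 1)), V i) = V k ∩ JV := by
        rw [hins, Finset.set_biInter_insert]
      have hSsplit : ∑ i ∈ Finset.Icc k (k + (d + 1)), (ε : ℝ≥0∞) * 2⁻¹ ^ (i + 1)
          = (ε : ℝ≥0∞) * 2⁻¹ ^ (k + 1) + ∑ i ∈ Finset.Icc (k + 1) (k + 1 + d),
            (ε : ℝ≥0∞) * 2⁻¹ ^ (i + 1) := by
        rw [hins, Finset.sum_insert hknot]
      rw [hUsplit, hVsplit, hSsplit]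
      -- the meet covers W k
      have hmeet : W k ⊆ (U k ∩ JU) ×ˢ Ioo (0:ℝ) 1 ∪ Ioo (0:ℝ) 1 ×ˢ (V k ∪ JV) := by
        intro p hp
        rcases hcov k hp with h1 | h1
        · rcases hJcov (k + 1) (k + 1 + d) (by omega) (hmono (Nat.le_succ k) hp) with h2 | h2
          · exact Or.inl ⟨⟨h1.1, h2.1⟩, h1.2⟩
          · exact Or.inr ⟨h2.1, Or.inr h2.2⟩
        · exact Or.inr ⟨h1.1, Or.inl h1.2⟩
      have hJVsubI : JV ⊆ Ioo (0:ℝ) 1 := by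
        refine Subset.trans ?_ (hVI (k + 1))
        exact iInter₂_subset (k + 1) (Finset.mem_Icc.mpr (by omega))
      have hmeet_le : beta (W k) ≤ volume (U k ∩ JU) + volume (V k ∪ JV) :=
        beta_le_of_cover ((hU k).inter (hJUmeas _ _)) ((hV k).union (hJVmeas _ _))
          ((inter_subset_left).trans (hUI k)) (union_subset (hVI k) hJVsubI) hmeet
      -- modularity
      have hmodU : volume (U k ∪ JU) + volume (U k ∩ JU) = volume (U k) + volume JU :=
        measure_union_add_inter (U k) (hJUmeas _ _)
      have hmodV : volume (V k ∪ JV) + volume (V k ∩ JV) = volume (V k) + volume JV :=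
        measure_union_add_inter (V k) (hJVmeas _ _)
      have ihk := ih (k + 1)
      rw [← hJU, ← hJV] at ihk
      -- combine
      have hcomb : volume (U k ∪ JU) + volume (V k ∩ JV) + beta (W k)
          ≤ beta (W k) + ((ε : ℝ≥0∞) * 2⁻¹ ^ (k + 1) +
            (L + ∑ i ∈ Finset.Icc (k + 1) (k + 1 + d), (ε : ℝ≥0∞) * 2⁻¹ ^ (i + 1))) := by
        calc volume (U k ∪ JU) + volume (V k ∩ JV) + beta (W k)
            ≤ volume (U k ∪ JU) + volume (V k ∩ JV)
              + (volume (U k ∩ JU) + volume (V k ∪ JV)) := by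
              exact add_le_add_right hmeet_le _
          _ = (volume (U k ∪ JU) + volume (U k ∩ JU))
              + (volume (V k ∪ JV) + volume (V k ∩ JV)) := by ring
          _ = (volume (U k) + volume JU) + (volume (V k) + volume JV) := by
              rw [hmodU, hmodV]
          _ = (volume (U k) + volume (V k)) + (volume JU + volume JV) := by ring
          _ ≤ (beta (W k) + (ε : ℝ≥0∞) * 2⁻¹ ^ (k + 1))
              + (L + ∑ i ∈ Finset.Icc (k + 1) (k + 1 + d), (ε : ℝ≥0∞) * 2⁻¹ ^ (i + 1)) :=
              add_le_add (hcost k) ihk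
          _ = beta (W k) + ((ε : ℝ≥0∞) * 2⁻¹ ^ (k + 1) +
              (L + ∑ i ∈ Finset.Icc (k + 1) (k + 1 + d), (ε : ℝ≥0∞) * 2⁻¹ ^ (i + 1))) := by
              ring
      have := (ENNReal.add_le_add_iff_left (hcne k)).mp
        (by calc beta (W k) + (volume (U k ∪ JU) + volume (V k ∩ JV))
              = volume (U k ∪ JU) + volume (V k ∩ JV) + beta (W k) := by ring
          _ ≤ _ := hcomb)
      calc volume (U k ∪ JU) + volume (V k ∩ JV)
          ≤ (ε : ℝ≥0∞) * 2⁻¹ ^ (k + 1) +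
            (L + ∑ i ∈ Finset.Icc (k + 1) (k + 1 + d), (ε : ℝ≥0∞) * 2⁻¹ ^ (i + 1)) := this
        _ = L + ((ε : ℝ≥0∞) * 2⁻¹ ^ (k + 1) +
            ∑ i ∈ Finset.Icc (k + 1) (k + 1 + d), (ε : ℝ≥0∞) * 2⁻¹ ^ (i + 1)) := by ring
  -- geometric sum bound
  have hgeo : ∑' i : ℕ, (2⁻¹ : ℝ≥0∞) ^ (i + 1) = 1 := by
    simp only [pow_succ]
    rw [ENNReal.tsum_mul_right, ENNReal.tsum_geometric, ENNReal.one_sub_inv_two, inv_inv]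
    exact ENNReal.mul_inv_cancel two_ne_zero ENNReal.ofNat_ne_top
  have hSle : ∀ n M : ℕ, ∑ i ∈ Finset.Icc n M, (ε : ℝ≥0∞) * 2⁻¹ ^ (i + 1) ≤ (ε : ℝ≥0∞) := by
    intro n M
    calc ∑ i ∈ Finset.Icc n M, (ε : ℝ≥0∞) * 2⁻¹ ^ (i + 1)
        = (ε : ℝ≥0∞) * ∑ i ∈ Finset.Icc n M, (2⁻¹ : ℝ≥0∞) ^ (i + 1) := by
          rw [Finset.mul_sum]
      _ ≤ (ε : ℝ≥0∞) * ∑' i : ℕ, (2⁻¹ : ℝ≥0∞) ^ (i + 1) := by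
          gcongr
          exact ENNReal.sum_le_tsum _
      _ = ε := by rw [hgeo, mul_one]
  -- the infinite tail joins
  set A : ℕ → Set ℝ := fun n => ⋃ (k) (_ : n ≤ k), U k with hA
  set B : ℕ → Set ℝ := fun n => ⋂ (k) (_ : n ≤ k), V k with hB
  have hAmeas : ∀ n, MeasurableSet (A n) := fun n =>
    MeasurableSet.iUnion fun k => MeasurableSet.iUnion fun _ => hU k
  have hBmeas : ∀ n, MeasurableSet (B n) := fun n =>
    MeasurableSet.iInter fun k => MeasurableSet.iInter fun _ => hV k
  have hJUmono : ∀ n (M M' : ℕ), M ≤ M' →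
      (⋃ i ∈ Finset.Icc n M, U i) ⊆ ⋃ i ∈ Finset.Icc n M', U i := by
    intro n M M' h x hx
    simp only [mem_iUnion, Finset.mem_Icc, exists_prop] at hx ⊢
    obtain ⟨i, hi, hx⟩ := hx
    exact ⟨i, ⟨hi.1, by omega⟩, hx⟩
  have hAB : ∀ n, volume (A n) + volume (B n) ≤ L + ε := by
    intro n
    have hAeq : A n = ⋃ M, ⋃ i ∈ Finset.Icc n M, U i := by
      ext x
      simp only [hA, mem_iUnion, Finset.mem_Icc, exists_prop]
      constructor
      · rintro ⟨k, hk, hx⟩; exact ⟨k, k, ⟨hk, le_rfl⟩, hx⟩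
      · rintro ⟨M, i, ⟨hi, _⟩, hx⟩; exact ⟨i, hi, hx⟩
    have hdir : Directed (· ⊆ ·) (fun M => ⋃ i ∈ Finset.Icc n M, U i) :=
      Monotone.directed_le (fun M M' h => hJUmono n M M' h)
    rw [hAeq, Directed.measure_iUnion hdir, ENNReal.iSup_add]
    refine iSup_le fun M => ?_
    have hMn : n ≤ max M n := le_max_right M n
    have hBsub : B n ⊆ ⋂ i ∈ Finset.Icc n (max M n), V i := by
      intro x hx
      simp only [hB, mem_iInter] at hx ⊢
      exact fun i hi => hx i (Finset.mem_Icc.mp hi).1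
    calc volume (⋃ i ∈ Finset.Icc n M, U i) + volume (B n)
        ≤ volume (⋃ i ∈ Finset.Icc n (max M n), U i)
          + volume (⋂ i ∈ Finset.Icc n (max M n), V i) :=
          add_le_add (measure_mono (hJUmono n M (max M n) (le_max_left M n)))
            (measure_mono hBsub)
      _ ≤ L + ∑ i ∈ Finset.Icc n (max M n), (ε : ℝ≥0∞) * 2⁻¹ ^ (i + 1) := by
          have := key (max M n - n) n
          rwa [Nat.add_sub_cancel' hMn] at this
      _ ≤ L + ε := add_le_add_right (hSle n _) L
  -- the limit cover
  have hcovW : (⋃ n, W n) ⊆ (⋂ n, A n) ×ˢ Ioo (0:ℝ) 1 ∪ Ioo (0:ℝ) 1 ×ˢ (⋃ n, B n) := by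
    intro p hp
    obtain ⟨m, hm⟩ := mem_iUnion.mp hp
    by_cases hy : ∃ n, p.2 ∈ B n
    · obtain ⟨n, hn⟩ := hy
      exact Or.inr ⟨(hsub m hm).1, mem_iUnion.mpr ⟨n, hn⟩⟩
    · push_neg at hy
      refine Or.inl ⟨mem_iInter.mpr fun n => ?_, (hsub m hm).2⟩
      have h1 := hy (max n m)
      simp only [hB, mem_iInter, not_forall] at h1
      obtain ⟨k, hk, hyk⟩ := h1
      have hpk : p ∈ W k := hmono (le_trans (le_max_right n m) hk) hm
      rcases hcov k hpk with h | h
      · exact mem_iUnion.mpr ⟨k, mem_iUnion.mpr ⟨le_trans (le_max_left n m) hk, h.1⟩⟩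
      · exact absurd h.2 hyk
  have hBdir : Directed (· ⊆ ·) B := by
    refine Monotone.directed_le fun n n' h x hx => ?_
    simp only [hB, mem_iInter] at hx ⊢
    exact fun k hk => hx k (le_trans h hk)
  have hAsubI : (⋂ n, A n) ⊆ Ioo (0:ℝ) 1 := by
    refine (iInter_subset A 0).trans ?_
    exact iUnion_subset fun k => iUnion_subset fun _ => hUI k
  have hBsubI : (⋃ n, B n) ⊆ Ioo (0:ℝ) 1 := by
    refine iUnion_subset fun n => ?_
    exact (iInter₂_subset n le_rfl).trans (hVI n)
  calc beta (⋃ n, W n)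
      ≤ volume (⋂ n, A n) + volume (⋃ n, B n) :=
        beta_le_of_cover (MeasurableSet.iInter fun n => hAmeas n)
          (MeasurableSet.iUnion fun n => hBmeas n) hAsubI hBsubI hcovW
    _ = ⨆ n, (volume (⋂ n', A n') + volume (B n)) := by
        rw [Directed.measure_iUnion hBdir, ENNReal.add_iSup]
    _ ≤ L + ε := iSup_le fun n =>
        le_trans (add_le_add_left (measure_mono (iInter_subset A n)) _) (hAB n)

theorem stmt1 (W : ℕ → Set (ℝ × ℝ)) (hmono : Monotone W)
    (hmeas : ∀ n, MeasurableSet (W n))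
    (hsub : ∀ n, W n ⊆ Ioo (0:ℝ) 1 ×ˢ Ioo (0:ℝ) 1) :
    Monotone (fun n => beta (W n)) ∧
    Filter.Tendsto (fun n => beta (W n)) Filter.atTop
      (nhds (beta (⋃ n, W n))) := by
  have hbmono : Monotone (fun n => beta (W n)) := fun a b hab => beta_mono (hmono hab)
  refine ⟨hbmono, ?_⟩
  have heq : (⨆ n, beta (W n)) = beta (⋃ n, W n) :=
    le_antisymm (iSup_le fun n => beta_mono (subset_iUnion W n))
      (beta_iUnion_le W hmono hsub)
  rw [← heq]
  exact tendsto_atTop_iSup hbmono
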